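/- arXiv:1009.1014 — 9 statements merged into one kernel-verified Lean document; each statement's English description precedes it below -/
import Mathlib

section
/- Let p_1 < p_2 < ⋯ be an infinite sequence of primes, and for each positive integer k define S_k = {n ∈ ℕ : Ω(n) = k, p_k ∣ n, gcd(p_1⋯p_{k-1}, n) = 1}. Then the set S = ⋃_{k≥1} S_k is primitive: no element of S divides another distinct element of S. -/
def Primitive (S : Set ℕ) : Prop := ∀ a ∈ S, ∀ b ∈ S, a ≠ b → ¬ a ∣ b

theorem stmt_1 (p : ℕ → ℕ) (hp : ∀ k, 1 ≤ k → (p k).Prime) (hmono : StrictMono p)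
    (S : ℕ → Set ℕ)
    (hS : ∀ k, 1 ≤ k → S k = {n : ℕ | 0 < n ∧ n.primeFactorsList.length = k ∧ p k ∣ n ∧
      Nat.Coprime (∏ j ∈ Finset.Icc 1 (k - 1), p j) n}) :
    Primitive (⋃ k ∈ {k : ℕ | 1 ≤ k}, S k) := by
  intro a ha b hb hne hdvd
  simp only [Set.mem_iUnion, Set.mem_setOf_eq] at ha hb
  obtain ⟨k, hk1, hak⟩ := ha
  obtain ⟨l, hl1, hbl⟩ := hb
  rw [hS k hk1] at hak
  rw [hS l hl1] at hbl
  obtain ⟨hapos, haΩ, hpk, -⟩ := hak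
  obtain ⟨hbpos, hbΩ, -, hcop⟩ := hbl
  obtain ⟨c, hc⟩ := hdvd
  have hcne : c ≠ 0 := by rintro rfl; simp at hc; omega
  have hcne1 : c ≠ 1 := by rintro rfl; simp at hc; exact hne hc.symm
  have hlen : b.primeFactorsList.length
      = a.primeFactorsList.length + c.primeFactorsList.length := by
    rw [hc]
    have := (Nat.perm_primeFactorsList_mul hapos.ne' hcne).length_eq
    simpa using this
  have hclen : 1 ≤ c.primeFactorsList.length := by
    rcases Nat.exists_prime_and_dvd hcne1 with ⟨q, hq, hqc⟩
    have : q ∈ c.primeFactorsList := (Nat.mem_primeFactorsList hcne).mpr ⟨hq, hqc⟩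
    exact List.length_pos_iff.mpr (fun h => by simp [h] at this)
  have hkl : k < l := by omega
  have hmem : k ∈ Finset.Icc 1 (l - 1) := by
    simp only [Finset.mem_Icc]; omega
  have hdvdprod : p k ∣ ∏ j ∈ Finset.Icc 1 (l - 1), p j :=
    Finset.dvd_prod_of_mem _ hmem
  have hpkb : p k ∣ b := hpk.trans ⟨c, hc⟩
  have : p k ∣ 1 := Nat.dvd_gcd hdvdprod hpkb |>.trans hcop.dvd
  exact (hp k hk1).one_lt.ne' (Nat.dvd_one.mp this)
end

section
/- If j < k are positive integers, m ∈ S_j, and n ∈ S_k (with S_j, S_k as defined from a strictly increasing prime sequence p_1 < p_2 < ⋯), then m does not divide n. -/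
theorem stmt_2 (p : ℕ → ℕ) (hp : ∀ k, 1 ≤ k → (p k).Prime) (hmono : StrictMono p)
    (S : ℕ → Set ℕ)
    (hS : ∀ k, 1 ≤ k → S k = {n : ℕ | 0 < n ∧ n.primeFactorsList.length = k ∧ p k ∣ n ∧
      Nat.Coprime (∏ i ∈ Finset.Icc 1 (k - 1), p i) n})
    (j k : ℕ) (hj : 1 ≤ j) (hjk : j < k) (m n : ℕ) (hm : m ∈ S j) (hn : n ∈ S k) :
    ¬ m ∣ n := by
  intro hdvd
  rw [hS j hj] at hm
  rw [hS k (le_trans hj hjk.le)] at hn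
  obtain ⟨-, -, hpm, -⟩ := hm
  obtain ⟨-, -, -, hcop⟩ := hn
  have hjmem : j ∈ Finset.Icc 1 (k - 1) :=
    Finset.mem_Icc.2 ⟨hj, Nat.le_sub_one_of_lt hjk⟩
  have h1 : p j ∣ ∏ i ∈ Finset.Icc 1 (k - 1), p i := Finset.dvd_prod_of_mem _ hjmem
  have h2 : p j ∣ n := hpm.trans hdvd
  have hc : Nat.Coprime (p j) n := hcop.coprime_dvd_left h1
  have h3 : p j = 1 := Nat.eq_one_of_dvd_one (hc ▸ Nat.dvd_gcd dvd_rfl h2)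
  exact (hp j hj).one_lt.ne' h3
end

section
/- Let S be a set of integers greater than 1 such that ∑_{n ∈ S} 1/(n log n) converges. Then ∫_2^∞ S(t)/(t² log t) dt converges, where S(t) = #{n ∈ S : n ≤ t}. -/
open MeasureTheory

theorem stmt_8 (S : Set ℕ) (hS : ∀ n ∈ S, 1 < n)
    (hsum : Summable (fun n : S => 1 / ((n : ℝ) * Real.log (n : ℕ)))) :
    IntegrableOn (fun t : ℝ =>
      ({n ∈ S | (n : ℝ) ≤ t}.ncard : ℝ) / (t ^ 2 * Real.log t)) (Set.Ici 2) := by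
  classical
  -- the sets counted are finite
  have hfin : ∀ t : ℝ, {n ∈ S | (n : ℝ) ≤ t}.Finite := by
    intro t
    refine (Set.finite_Iic (⌊t⌋₊)).subset ?_
    intro n hn
    exact Nat.le_floor hn.2
  -- monotonicity of the counting function
  have hmono : Monotone (fun t : ℝ => ({n ∈ S | (n : ℝ) ≤ t}.ncard : ℝ)) := by
    intro s t hst
    have hsub : {n ∈ S | (n : ℝ) ≤ s} ⊆ {n ∈ S | (n : ℝ) ≤ t} :=
      fun n hn => ⟨hn.1, hn.2.trans hst⟩
    have := Set.ncard_le_ncard hsub (hfin t)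
    dsimp only
    exact_mod_cast this
  have hmeas : Measurable (fun t : ℝ =>
      ({n ∈ S | (n : ℝ) ≤ t}.ncard : ℝ) / (t ^ 2 * Real.log t)) :=
    hmono.measurable.div ((measurable_id.pow_const 2).mul Real.measurable_log)
  refine ⟨hmeas.aestronglyMeasurable, ?_⟩
  rw [hasFiniteIntegral_iff_norm]
  set g : ℝ → ENNReal := fun t => ENNReal.ofReal (1 / (t ^ 2 * Real.log t)) with hg
  have hgmeas : Measurable g :=
    (measurable_const.div ((measurable_id.pow_const 2).mul Real.measurable_log)).ennreal_ofReal
  set A : ℕ → Set ℝ := fun n => if n ∈ S then Set.Ici (n : ℝ) else ∅ with hA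
  have hAmeas : ∀ n, MeasurableSet (A n) := by
    intro n
    by_cases h : n ∈ S <;> simp [hA, h]
  -- pointwise identity on [2, ∞)
  have hpt : ∀ t : ℝ, 2 ≤ t →
      ENNReal.ofReal ‖({n ∈ S | (n : ℝ) ≤ t}.ncard : ℝ) / (t ^ 2 * Real.log t)‖
        = ∑' n : ℕ, (A n).indicator g t := by
    intro t ht
    have ht0 : (0:ℝ) < t := by linarith
    have hlt : (0:ℝ) < Real.log t := Real.log_pos (by linarith)
    have hden : (0:ℝ) < t ^ 2 * Real.log t := by positivity
    have hnn : (0:ℝ) ≤ ({n ∈ S | (n : ℝ) ≤ t}.ncard : ℝ) / (t ^ 2 * Real.log t) := by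
      positivity
    rw [Real.norm_of_nonneg hnn]
    have hterm : ∀ n : ℕ, (A n).indicator g t
        = Set.indicator {n ∈ S | (n : ℝ) ≤ t} (fun _ => g t) n := by
      intro n
      by_cases hnS : n ∈ S
      · by_cases hnt : (n : ℝ) ≤ t
        · rw [Set.indicator_of_mem (by simpa [hA, hnS] using hnt),
            Set.indicator_of_mem (show n ∈ {n | n ∈ S ∧ (n:ℝ) ≤ t} from ⟨hnS, hnt⟩)]
        · rw [Set.indicator_of_notMem (by simpa [hA, hnS] using hnt),
            Set.indicator_of_notMem (fun h => hnt h.2)]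
      · rw [Set.indicator_of_notMem (by simp [hA, hnS]),
          Set.indicator_of_notMem (fun h => hnS h.1)]
    calc ENNReal.ofReal (({n ∈ S | (n : ℝ) ≤ t}.ncard : ℝ) / (t ^ 2 * Real.log t))
        = ENNReal.ofReal (({n ∈ S | (n : ℝ) ≤ t}.ncard : ℝ) * (1 / (t ^ 2 * Real.log t))) := by
          rw [mul_one_div]
      _ = ({n ∈ S | (n : ℝ) ≤ t}.ncard : ENNReal) * g t := by
          rw [ENNReal.ofReal_mul (by positivity), ENNReal.ofReal_natCast]
      _ = ({n ∈ S | (n : ℝ) ≤ t}.encard : ENNReal) * g t := by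
          rw [← (hfin t).cast_ncard_eq]
          norm_cast
      _ = ∑' n : {n ∈ S | (n : ℝ) ≤ t}, g t := by
          rw [ENNReal.tsum_set_const]
      _ = ∑' n : ℕ, Set.indicator {n ∈ S | (n : ℝ) ≤ t} (fun _ => g t) n := tsum_subtype {n | n ∈ S ∧ (n:ℝ) ≤ t} (fun _ => g t)
      _ = ∑' n : ℕ, (A n).indicator g t := by
          exact (tsum_congr fun n => (hterm n).symm)
  -- bound each individual integral
  have hbound : ∀ n : ℕ, n ∈ S →
      (∫⁻ t in Set.Ici (2:ℝ), (A n).indicator g t)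
        ≤ ENNReal.ofReal (1 / ((n : ℝ) * Real.log n)) := by
    intro n hnS
    have hn2 : 2 ≤ n := hS n hnS
    have hn2' : (2:ℝ) ≤ (n:ℝ) := by exact_mod_cast hn2
    have hn0 : (0:ℝ) < n := by linarith
    have hlogn : (0:ℝ) < Real.log n := Real.log_pos (by linarith)
    have hAn : A n = Set.Ici (n:ℝ) := by simp [hA, hnS]
    rw [lintegral_indicator (hAmeas n), Measure.restrict_restrict (hAmeas n), hAn]
    have hinter : Set.Ici (n:ℝ) ∩ Set.Ici (2:ℝ) = Set.Ici (n:ℝ) := by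
      rw [Set.inter_eq_left]
      exact Set.Ici_subset_Ici.mpr hn2'
    rw [hinter]
    -- compare with the integrable majorant (1/log n) * t ^ (-2)
    have hmaj : ∀ t ∈ Set.Ici (n:ℝ), g t ≤
        ENNReal.ofReal ((1 / Real.log n) * (t ^ 2)⁻¹) := by
      intro t ht
      have htn : (n:ℝ) ≤ t := ht
      have ht0 : (0:ℝ) < t := lt_of_lt_of_le hn0 htn
      have hlogt : Real.log n ≤ Real.log t := Real.log_le_log hn0 htn
      have hlt : (0:ℝ) < Real.log t := lt_of_lt_of_le hlogn hlogt
      apply ENNReal.ofReal_le_ofReal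
      have h2 : 1 / Real.log ↑n * (t ^ 2)⁻¹ = 1 / (t ^ 2 * Real.log ↑n) := by
        rw [one_div, ← mul_inv, mul_comm, one_div]
      rw [h2]
      refine one_div_le_one_div_of_le (by positivity) ?_
      nlinarith [mul_le_mul_of_nonneg_left hlogt (sq_nonneg t)]
    have heq : Set.EqOn (fun t : ℝ => (1 / Real.log n) * t ^ (-2:ℝ))
        (fun t : ℝ => (1 / Real.log n) * (t ^ 2)⁻¹) (Set.Ioi (n:ℝ)) := by
      intro x hx
      have hx0 : (0:ℝ) < x := lt_trans hn0 hx
      simp only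
      rw [show (-2:ℝ) = -((2:ℕ):ℝ) by norm_num, Real.rpow_neg hx0.le, Real.rpow_natCast]
    have hInt : IntegrableOn (fun t : ℝ => (1 / Real.log n) * (t ^ 2)⁻¹)
        (Set.Ioi (n:ℝ)) :=
      MeasureTheory.IntegrableOn.congr_fun
        ((integrableOn_Ioi_rpow_of_lt (show (-2:ℝ) < -1 by norm_num) hn0).const_mul _)
        heq measurableSet_Ioi
    calc (∫⁻ t in Set.Ici (n:ℝ), g t)
        ≤ ∫⁻ t in Set.Ici (n:ℝ), ENNReal.ofReal ((1 / Real.log n) * (t ^ 2)⁻¹) :=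
          setLIntegral_mono (by
            exact (((measurable_id.pow_const 2).inv).const_mul _).ennreal_ofReal)
            hmaj
      _ = ENNReal.ofReal (1 / ((n : ℝ) * Real.log n)) := by
          rw [← MeasureTheory.restrict_Ioi_eq_restrict_Ici]
          rw [← ofReal_integral_eq_lintegral_ofReal hInt ?_]
          · congr 1
            rw [← setIntegral_congr_fun measurableSet_Ioi heq]
            rw [MeasureTheory.integral_const_mul, integral_Ioi_rpow_of_lt (by norm_num) hn0]
            rw [show (-2:ℝ) + 1 = -1 by norm_num]
            rw [Real.rpow_neg_one]
            field_simp
          · filter_upwards [self_mem_ae_restrict measurableSet_Ioi] with t ht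
            have ht0 : (0:ℝ) < t := lt_trans hn0 ht
            positivity
  -- sum of the bounds is finite
  have hsum' : (∑' n : ℕ, Set.indicator S
      (fun n => ENNReal.ofReal (1 / ((n : ℝ) * Real.log n))) n) < ⊤ := by
    rw [← tsum_subtype S (fun n => ENNReal.ofReal (1 / ((n : ℝ) * Real.log n)))]
    have : (∑' n : S, ENNReal.ofReal (1 / ((n : ℝ) * Real.log (n:ℕ))))
        = ENNReal.ofReal (∑' n : S, 1 / ((n : ℝ) * Real.log (n:ℕ))) := by
      rw [ENNReal.ofReal_tsum_of_nonneg ?_ hsum]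
      intro n
      have hn2 : 2 ≤ (n:ℕ) := hS n n.2
      have hn2' : (2:ℝ) ≤ ((n:ℕ):ℝ) := by exact_mod_cast hn2
      have : (0:ℝ) < Real.log (n:ℕ) := Real.log_pos (by linarith)
      positivity
    rw [this]
    exact ENNReal.ofReal_lt_top
  -- put everything together
  calc (∫⁻ t in Set.Ici (2:ℝ),
        ENNReal.ofReal ‖({n ∈ S | (n : ℝ) ≤ t}.ncard : ℝ) / (t ^ 2 * Real.log t)‖)
      = ∫⁻ t in Set.Ici (2:ℝ), ∑' n : ℕ, (A n).indicator g t := by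
        refine setLIntegral_congr_fun measurableSet_Ici ?_
        exact fun t ht => hpt t ht
    _ = ∑' n : ℕ, ∫⁻ t in Set.Ici (2:ℝ), (A n).indicator g t :=
        lintegral_tsum fun n => ((hgmeas.indicator (hAmeas n)).aemeasurable)
    _ ≤ ∑' n : ℕ, Set.indicator S
          (fun n => ENNReal.ofReal (1 / ((n : ℝ) * Real.log n))) n := by
        refine ENNReal.tsum_le_tsum fun n => ?_
        by_cases hnS : n ∈ S
        · rw [Set.indicator_of_mem hnS]
          exact hbound n hnS
        · rw [Set.indicator_of_notMem hnS]
          have : A n = ∅ := by simp [hA, hnS]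
          simp [this]
    _ < ⊤ := hsum'
end

section
/- Suppose L : [2,∞) → ℝ is positive and increasing, and S is a set of integers greater than 1 whose counting function satisfies S(x) ≥ c·x/(log₂x · log₃x · L(log₂x)) for some c > 0 and all sufficiently large x, where log₂ and log₃ are iterated logarithms. If ∑_{n∈S} 1/(n log n) converges, then ∫_2^∞ dt/(t · log t · L(t)) converges. -/
open MeasureTheory Set

noncomputable def log1 (x : ℝ) : ℝ := max 1 (Real.log x)
noncomputable def log2 (x : ℝ) : ℝ := log1 (log1 x)
noncomputable def log3 (x : ℝ) : ℝ := log1 (log2 x)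

lemma log1_meas : Measurable log1 := measurable_const.max Real.measurable_log
lemma log2_meas : Measurable log2 := log1_meas.comp log1_meas
lemma log3_meas : Measurable log3 := log1_meas.comp log2_meas
lemma one_le_log1 (x : ℝ) : 1 ≤ log1 x := le_max_left _ _
lemma log1_eq {x : ℝ} (hx : 1 ≤ Real.log x) : log1 x = Real.log x := max_eq_right hx

lemma log2_big {x : ℝ} (hx : Real.exp (Real.exp 3) ≤ x) :
    log2 x = Real.log (Real.log x) ∧ 3 ≤ log2 x := by
  have hx0 : (0:ℝ) < Real.exp (Real.exp 3) := Real.exp_pos _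
  have hlx : Real.exp 3 ≤ Real.log x := by
    have := Real.log_le_log hx0 hx
    simpa [Real.log_exp] using this
  have h3 : (3:ℝ) ≤ Real.exp 3 := by nlinarith [Real.add_one_le_exp (3:ℝ)]
  have h1 : 1 ≤ Real.log x := by linarith
  have hllx : 3 ≤ Real.log (Real.log x) := by
    have := Real.log_le_log (Real.exp_pos 3) hlx
    simpa [Real.log_exp] using this
  have : log2 x = Real.log (Real.log x) := by
    rw [log2, log1_eq h1, log1_eq (by linarith)]
  exact ⟨this, this ▸ hllx⟩

lemma tail_int {n : ℕ} (hn : 2 ≤ n) :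
    ∫⁻ x in Set.Ici (n:ℝ), ENNReal.ofReal ((Real.log n)⁻¹ * x ^ (-2:ℝ)) =
      ENNReal.ofReal ((Real.log n)⁻¹ * (n:ℝ)⁻¹) := by
  have hn0 : (0:ℝ) < n := by positivity
  rw [MeasureTheory.Measure.restrict_congr_set (MeasureTheory.Ioi_ae_eq_Ici (a := (n:ℝ))).symm]
  rw [← MeasureTheory.ofReal_integral_eq_lintegral_ofReal]
  · congr 1
    rw [MeasureTheory.integral_const_mul, integral_Ioi_rpow_of_lt (by norm_num) hn0]
    norm_num [Real.rpow_neg_one]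
  · exact (integrableOn_Ioi_rpow_of_lt (by norm_num) hn0).const_mul _
  · filter_upwards [ae_restrict_mem measurableSet_Ioi] with x hx
    have : (0:ℝ) < x := lt_trans hn0 hx
    have h2 : (0:ℝ) ≤ Real.log n := Real.log_nonneg (by exact_mod_cast hn.trans' (by norm_num))
    positivity

theorem stmt_9 (L : ℝ → ℝ) (hpos : ∀ x, 2 ≤ x → 0 < L x)
    (hmono : ∀ x y, 2 ≤ x → x ≤ y → L x ≤ L y)
    (S : Set ℕ) (hS : ∀ n ∈ S, 1 < n)
    (c : ℝ) (hc : 0 < c) (x₀ : ℝ)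
    (hcount : ∀ x : ℝ, x₀ ≤ x →
      c * x / (log2 x * log3 x * L (log2 x)) ≤ ({n ∈ S | (n : ℝ) ≤ x}.ncard : ℝ))
    (hsum : Summable (fun n : S => 1 / ((n : ℝ) * Real.log (n : ℕ)))) :
    IntegrableOn (fun t : ℝ => 1 / (t * Real.log t * L t)) (Set.Ici 2) := by
  classical
  set L' : ℝ → ℝ := fun t => L (max 2 t) with hL'def
  have hL'mono : Monotone L' := fun a b hab =>
    hmono _ _ (le_max_left _ _) (max_le_max le_rfl hab)
  have hL'pos : ∀ t, 0 < L' t := fun t => hpos _ (le_max_left _ _)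
  have hL'meas : Measurable L' := hL'mono.measurable
  have hL'eq : ∀ t, 2 ≤ t → L' t = L t := fun t ht => by
    simp only [hL'def, max_eq_right ht]
  set M : ℝ := max x₀ (Real.exp (Real.exp 3)) with hMdef
  have hM3 : Real.exp (Real.exp 3) ≤ M := le_max_right _ _
  have hMx₀ : x₀ ≤ M := le_max_left _ _
  have hM1 : (1:ℝ) < M := by
    have h3 : (3:ℝ) ≤ Real.exp 3 := by nlinarith [Real.add_one_le_exp (3:ℝ)]
    have : (3:ℝ) ≤ Real.exp (Real.exp 3) := le_trans h3 (by nlinarith [Real.add_one_le_exp (Real.exp 3)])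
    linarith
  -- the weight function
  set ψ : ℝ → ENNReal := fun x => ENNReal.ofReal ((Real.log x)⁻¹ * x ^ (-2:ℝ)) with hψdef
  have hψmeas : Measurable ψ :=
    ((Real.measurable_log.inv).mul (measurable_id.pow_const _)).ennreal_ofReal
  -- the per-n functions
  set F : ℕ → ℝ → ENNReal := fun n x =>
    if n ∈ S then Set.indicator (Set.Ici (n:ℝ)) ψ x else 0 with hFdef
  have hFmeas : ∀ n, Measurable (F n) := by
    intro n
    by_cases hn : n ∈ S <;> simp only [hFdef, hn, if_true, if_false]
    · exact hψmeas.indicator measurableSet_Ici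
    · exact measurable_const
  -- pointwise bound: count * ψ ≤ ∑' F n
  have hpt : ∀ x : ℝ, (({n ∈ S | (n : ℝ) ≤ x}.ncard : ENNReal)) * ψ x ≤ ∑' n : ℕ, F n x := by
    intro x
    have hfin : {n ∈ S | (n : ℝ) ≤ x}.Finite := by
      apply Set.Finite.subset (Set.finite_Iic ⌊x⌋₊)
      intro n hn
      exact Nat.le_floor hn.2
    rw [Set.ncard_eq_toFinset_card _ hfin]
    calc (hfin.toFinset.card : ENNReal) * ψ x
        = ∑ n ∈ hfin.toFinset, ψ x := by
          rw [Finset.sum_const, nsmul_eq_mul]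
      _ = ∑ n ∈ hfin.toFinset, F n x := by
          apply Finset.sum_congr rfl
          intro n hn
          rw [Set.Finite.mem_toFinset] at hn
          simp only [hFdef, hn.1, if_true]
          exact (Set.indicator_of_mem hn.2 ψ).symm
      _ ≤ ∑' n : ℕ, F n x := ENNReal.sum_le_tsum _
  -- per-n integral bound
  have hFn : ∀ n : ℕ, ∫⁻ x in Set.Ici M, F n x ≤
      Set.indicator S (fun n => ENNReal.ofReal ((Real.log n)⁻¹ * (n:ℝ)⁻¹)) n := by
    intro n
    by_cases hn : n ∈ S
    · have hn2 : 2 ≤ n := hS n hn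
      have hlogn : 0 < Real.log n := Real.log_pos (by exact_mod_cast hn2.trans_lt' one_lt_two)
      rw [Set.indicator_of_mem hn]
      have hle : ∀ x : ℝ, F n x ≤ Set.indicator (Set.Ici (n:ℝ))
          (fun x => ENNReal.ofReal ((Real.log n)⁻¹ * x ^ (-2:ℝ))) x := by
        intro x
        simp only [hFdef, hn, if_true]
        by_cases hx : x ∈ Set.Ici (n:ℝ)
        · rw [Set.indicator_of_mem hx, Set.indicator_of_mem hx]
          apply ENNReal.ofReal_le_ofReal
          have hxn : (n:ℝ) ≤ x := hx
          have hx0 : (0:ℝ) < x := lt_of_lt_of_le (by positivity) hxn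
          have : Real.log n ≤ Real.log x := Real.log_le_log (by positivity) hxn
          have h1 : (Real.log x)⁻¹ ≤ (Real.log n)⁻¹ := by
            apply inv_anti₀ hlogn this
          exact mul_le_mul_of_nonneg_right h1 (Real.rpow_nonneg hx0.le _)
        · rw [Set.indicator_of_notMem hx, Set.indicator_of_notMem hx]
      calc ∫⁻ x in Set.Ici M, F n x
          ≤ ∫⁻ x in Set.Ici M, Set.indicator (Set.Ici (n:ℝ))
              (fun x => ENNReal.ofReal ((Real.log n)⁻¹ * x ^ (-2:ℝ))) x :=
            lintegral_mono (fun x => hle x)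
        _ ≤ ∫⁻ x, Set.indicator (Set.Ici (n:ℝ))
              (fun x => ENNReal.ofReal ((Real.log n)⁻¹ * x ^ (-2:ℝ))) x :=
            MeasureTheory.setLIntegral_le_lintegral _ _
        _ = ∫⁻ x in Set.Ici (n:ℝ), ENNReal.ofReal ((Real.log n)⁻¹ * x ^ (-2:ℝ)) := by
            rw [MeasureTheory.lintegral_indicator measurableSet_Ici]
        _ = ENNReal.ofReal ((Real.log n)⁻¹ * (n:ℝ)⁻¹) := tail_int hn2
    · simp only [hFdef, hn, if_false, Set.indicator_of_notMem hn]
      simp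
  -- summability of the bounds
  have hbdd : ∑' n : ℕ, Set.indicator S (fun n => ENNReal.ofReal ((Real.log n)⁻¹ * (n:ℝ)⁻¹)) n ≠ ⊤ := by
    rw [← tsum_subtype]
    have heq : ∀ n : S, ENNReal.ofReal ((Real.log (n:ℕ))⁻¹ * ((n:ℕ):ℝ)⁻¹) =
        ENNReal.ofReal (1 / (((n:ℕ):ℝ) * Real.log (n:ℕ))) := by
      intro n
      congr 1
      field_simp
    calc ∑' n : S, ENNReal.ofReal ((Real.log (n:ℕ))⁻¹ * ((n:ℕ):ℝ)⁻¹)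
        = ∑' n : S, ENNReal.ofReal (1 / (((n:ℕ):ℝ) * Real.log (n:ℕ))) := by
          exact tsum_congr heq
      _ = ENNReal.ofReal (∑' n : S, 1 / (((n:ℕ):ℝ) * Real.log (n:ℕ))) := by
          rw [ENNReal.ofReal_tsum_of_nonneg _ hsum]
          intro n
          have hn2 : 2 ≤ (n:ℕ) := hS n n.2
          have : (0:ℝ) < Real.log (n:ℕ) := Real.log_pos (by exact_mod_cast hn2.trans_lt' one_lt_two)
          positivity
      _ ≠ ⊤ := ENNReal.ofReal_ne_top
  -- key finiteness
  have key : ∫⁻ x in Set.Ici M, (({n ∈ S | (n : ℝ) ≤ x}.ncard : ENNReal)) * ψ x ≠ ⊤ := by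
    apply ne_of_lt
    calc ∫⁻ x in Set.Ici M, (({n ∈ S | (n : ℝ) ≤ x}.ncard : ENNReal)) * ψ x
        ≤ ∫⁻ x in Set.Ici M, ∑' n : ℕ, F n x := lintegral_mono hpt
      _ = ∑' n : ℕ, ∫⁻ x in Set.Ici M, F n x :=
          MeasureTheory.lintegral_tsum (fun n => (hFmeas n).aemeasurable)
      _ ≤ ∑' n : ℕ, Set.indicator S (fun n => ENNReal.ofReal ((Real.log n)⁻¹ * (n:ℝ)⁻¹)) n :=
          ENNReal.tsum_le_tsum hFn
      _ < ⊤ := hbdd.lt_top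
  -- the integrand in the x variable
  set g : ℝ → ℝ := fun x => 1 / (x * Real.log x * (log2 x * log3 x * L' (log2 x))) with hgdef
  have hgmeas : Measurable g := measurable_const.div
    ((measurable_id.mul Real.measurable_log).mul
      ((log2_meas.mul log3_meas).mul (hL'meas.comp log2_meas)))
  -- pointwise comparison on Ici M
  have hptwise : ∀ x : ℝ, M ≤ x →
      0 < g x ∧ g x ≤ c⁻¹ * (({n ∈ S | (n : ℝ) ≤ x}.ncard : ℝ) * ((Real.log x)⁻¹ * x ^ (-2:ℝ))) := by
    intro x hx
    set N : ℝ := ({n ∈ S | (n : ℝ) ≤ x}.ncard : ℝ) with hNdef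
    have hx1 : (1:ℝ) < x := lt_of_lt_of_le hM1 hx
    have hx0 : (0:ℝ) < x := by linarith
    have hlx : 0 < Real.log x := Real.log_pos hx1
    have hl2 := (log2_big (le_trans hM3 hx)).2
    have hl2pos : (0:ℝ) < log2 x := by linarith
    have hl3pos : (0:ℝ) < log3 x := lt_of_lt_of_le one_pos (one_le_log1 _)
    have hLpos : 0 < L (log2 x) := hpos _ (by linarith)
    have hL'x : L' (log2 x) = L (log2 x) := hL'eq _ (by linarith)
    set D : ℝ := log2 x * log3 x * L (log2 x) with hDdef
    have hD : 0 < D := by positivity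
    have hN : c * x / D ≤ N := hcount x (le_trans hMx₀ hx)
    have hcx : c * x ≤ N * D := (div_le_iff₀ hD).1 hN
    have hN0 : 0 ≤ N := le_trans (by positivity) hN
    have hg : g x = 1 / (x * Real.log x * D) := by rw [hgdef]; simp only [hL'x, hDdef]
    have hpow : x ^ (-2:ℝ) = (x ^ 2)⁻¹ := by
      rw [← Real.rpow_natCast x 2, ← Real.rpow_neg hx0.le]
      norm_num
    constructor
    · rw [hg]; positivity
    · rw [hg, hpow]
      have hRHS : c⁻¹ * (N * ((Real.log x)⁻¹ * (x ^ 2)⁻¹)) = N / (c * (x ^ 2 * Real.log x)) := by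
        field_simp
      rw [hRHS, div_le_div_iff₀ (by positivity) (by positivity)]
      have key2 : c * x * (x * Real.log x) ≤ N * D * (x * Real.log x) :=
        mul_le_mul_of_nonneg_right hcx (by positivity)
      nlinarith [key2]
  -- integrability of g on Ici M
  have hgint : IntegrableOn g (Set.Ici M) := by
    refine ⟨hgmeas.aestronglyMeasurable, ?_⟩
    rw [MeasureTheory.hasFiniteIntegral_iff_ofReal ?_]
    swap
    · filter_upwards [ae_restrict_mem measurableSet_Ici] with x hx
      exact (hptwise x hx).1.le
    calc ∫⁻ x in Set.Ici M, ENNReal.ofReal (g x)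
        ≤ ∫⁻ x in Set.Ici M, ENNReal.ofReal c⁻¹ *
            ((({n ∈ S | (n : ℝ) ≤ x}.ncard : ENNReal)) * ψ x) := by
          apply MeasureTheory.lintegral_mono_ae
          filter_upwards [ae_restrict_mem measurableSet_Ici] with x hx
          calc ENNReal.ofReal (g x)
              ≤ ENNReal.ofReal (c⁻¹ * (({n ∈ S | (n : ℝ) ≤ x}.ncard : ℝ) *
                  ((Real.log x)⁻¹ * x ^ (-2:ℝ)))) := ENNReal.ofReal_le_ofReal (hptwise x hx).2
            _ = ENNReal.ofReal c⁻¹ * ((({n ∈ S | (n : ℝ) ≤ x}.ncard : ENNReal)) * ψ x) := by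
                rw [ENNReal.ofReal_mul (by positivity), ENNReal.ofReal_mul (by positivity),
                  ENNReal.ofReal_natCast]
      _ = ENNReal.ofReal c⁻¹ * ∫⁻ x in Set.Ici M,
            (({n ∈ S | (n : ℝ) ≤ x}.ncard : ENNReal)) * ψ x :=
          MeasureTheory.lintegral_const_mul' _ _ ENNReal.ofReal_ne_top
      _ < ⊤ := ENNReal.mul_lt_top ENNReal.ofReal_lt_top key.lt_top
  -- change of variables x = exp (exp t)
  set T : ℝ := Real.log (Real.log M) with hTdef
  have hlM : Real.exp 3 ≤ Real.log M := by
    have := Real.log_le_log (Real.exp_pos _) hM3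
    simpa [Real.log_exp] using this
  have hlM0 : 0 < Real.log M := lt_of_lt_of_le (Real.exp_pos 3) hlM
  have hT3 : (3:ℝ) ≤ T := by
    rw [hTdef]
    have := Real.log_le_log (Real.exp_pos 3) hlM
    simpa [Real.log_exp] using this
  set φ : ℝ → ℝ := fun t => Real.exp (Real.exp t) with hφdef
  have hφT : φ T = M := by
    show Real.exp (Real.exp (Real.log (Real.log M))) = M
    rw [Real.exp_log hlM0, Real.exp_log (by linarith)]
  have hφmono : StrictMono φ := fun a b hab =>
    Real.exp_lt_exp.2 (Real.exp_lt_exp.2 hab)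
  have himg : φ '' Set.Ici T = Set.Ici M := by
    apply Set.Subset.antisymm
    · rintro y ⟨t, ht, rfl⟩
      exact hφT ▸ (hφmono.monotone ht)
    · intro y hy
      have hy1 : 1 < y := lt_of_lt_of_le hM1 hy
      have hly : Real.log M ≤ Real.log y := Real.log_le_log (by linarith) hy
      have hly0 : 0 < Real.log y := lt_of_lt_of_le hlM0 hly
      refine ⟨Real.log (Real.log y), ?_, ?_⟩
      · rw [Set.mem_Ici, hTdef]
        exact Real.log_le_log hlM0 hly
      · rw [hφdef]
        simp only
        rw [Real.exp_log hly0, Real.exp_log (by linarith)]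
  have hderiv : ∀ t ∈ Set.Ici T, HasDerivWithinAt φ (Real.exp (Real.exp t) * Real.exp t) (Set.Ici T) t :=
    fun t _ => ((Real.hasDerivAt_exp t).exp).hasDerivWithinAt
  have hinj : Set.InjOn φ (Set.Ici T) := hφmono.injective.injOn
  have hsub : IntegrableOn (fun t => |Real.exp (Real.exp t) * Real.exp t| • g (φ t)) (Set.Ici T) := by
    rw [← MeasureTheory.integrableOn_image_iff_integrableOn_abs_deriv_smul
      measurableSet_Ici hderiv hinj g]
    rw [himg]
    exact hgint
  -- identify the substituted integrand with f' on Ici T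
  set f' : ℝ → ℝ := fun t => 1 / (t * Real.log t * L' t) with hf'def
  have heqT : Set.EqOn (fun t => |Real.exp (Real.exp t) * Real.exp t| • g (φ t)) f' (Set.Ici T) := by
    intro t ht
    have ht3 : (3:ℝ) ≤ t := le_trans hT3 ht
    have het : (1:ℝ) < Real.exp t := by
      rw [← Real.exp_zero]
      exact Real.exp_lt_exp.2 (by linarith)
    have h1 : Real.log (φ t) = Real.exp t := by rw [hφdef]; exact Real.log_exp _
    have hlog1φ : log1 (φ t) = Real.exp t := by rw [log1, h1, max_eq_right het.le]
    have hlog2φ : log2 (φ t) = t := by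
      rw [log2, hlog1φ, log1, Real.log_exp, max_eq_right (by linarith)]
    have hlt : 1 ≤ Real.log t := by
      have : Real.exp 1 ≤ t := by
        nlinarith [Real.exp_one_lt_d9.le]
      have := Real.log_le_log (Real.exp_pos 1) this
      simpa [Real.log_exp] using this
    have hlog3φ : log3 (φ t) = Real.log t := by
      rw [log3, hlog2φ, log1, max_eq_right hlt]
    have hφpos : 0 < φ t := Real.exp_pos _
    have hetpos : 0 < Real.exp t := Real.exp_pos _
    have habs : |Real.exp (Real.exp t) * Real.exp t| = φ t * Real.exp t := by
      rw [abs_of_pos (by positivity)]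
    simp only [smul_eq_mul, habs, hgdef, h1, hlog2φ, hlog3φ, hf'def]
    have hL't : L' t ≠ 0 := (hL'pos t).ne'
    have hltpos : Real.log t ≠ 0 := by positivity
    have ht0 : t ≠ 0 := by positivity
    have hφ0 : φ t ≠ 0 := (Real.exp_pos _).ne'
    have het0 : Real.exp t ≠ 0 := (Real.exp_pos _).ne'
    field_simp
  have hf'T : IntegrableOn f' (Set.Ici T) :=
    hsub.congr_fun heqT measurableSet_Ici
  -- boundedness on Icc 2 T
  have hf'meas : Measurable f' := measurable_const.div
    ((measurable_id.mul Real.measurable_log).mul hL'meas)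
  have hf'Icc : IntegrableOn f' (Set.Icc 2 T) := by
    apply MeasureTheory.Measure.integrableOn_of_bounded (M := (2 * Real.log 2 * L 2)⁻¹)
    · exact (measure_Icc_lt_top).ne
    · exact hf'meas.aestronglyMeasurable
    · filter_upwards [ae_restrict_mem measurableSet_Icc] with t ht
      have ht2 : (2:ℝ) ≤ t := ht.1
      have hlt2 : 0 < Real.log 2 := Real.log_pos one_lt_two
      have hlt : Real.log 2 ≤ Real.log t := Real.log_le_log two_pos ht2
      have hL2 : 0 < L 2 := hpos 2 le_rfl
      have hL2t : L 2 ≤ L' t := by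
        rw [hL'eq t ht2]
        exact hmono 2 t le_rfl ht2
      have hden : 2 * Real.log 2 * L 2 ≤ t * Real.log t * L' t := by
        apply mul_le_mul
        · apply mul_le_mul ht2 hlt hlt2.le (by linarith)
        · exact hL2t
        · exact hL2.le
        · have hltpos : 0 < Real.log t := lt_of_lt_of_le hlt2 hlt
          exact le_of_lt (mul_pos (by linarith : (0:ℝ) < t) hltpos)
      have hdenpos : 0 < 2 * Real.log 2 * L 2 :=
        mul_pos (mul_pos two_pos hlt2) hL2
      have hltpos : 0 < Real.log t := lt_of_lt_of_le hlt2 hlt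
      have hL'tpos : 0 < L' t := hL'pos t
      have hdenpos2 : 0 < t * Real.log t * L' t :=
        mul_pos (mul_pos (by linarith) hltpos) hL'tpos
      rw [hf'def]
      simp only [one_div]
      rw [Real.norm_eq_abs, abs_of_pos (inv_pos.2 hdenpos2)]
      exact inv_anti₀ hdenpos hden
  -- combine
  have hf'Ici2 : IntegrableOn f' (Set.Ici 2) := by
    apply (hf'Icc.union hf'T).mono_set
    intro t ht
    rcases le_total t T with h | h
    · exact Or.inl ⟨ht, h⟩
    · exact Or.inr h
  apply hf'Ici2.congr_fun _ measurableSet_Ici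
  intro t ht
  rw [hf'def]
  simp only [hL'eq t ht]
end

section
/- Let A be an infinite set of positive integers containing no primitive subset of size k (where k ≥ 2). Then A(x) ≪ k·log x, i.e., there is an absolute constant C with A(x) ≤ C·k·log x for all x ≥ 2. -/
theorem stmt_10 :
    ∃ C : ℝ, 0 < C ∧ ∀ (A : Set ℕ) (k : ℕ), 2 ≤ k → A.Infinite → (∀ a ∈ A, 0 < a) →
      (∀ T ⊆ A, T.Finite → Primitive T → T.ncard < k) →
      ∀ x : ℝ, 2 ≤ x → ({n ∈ A | (n : ℝ) ≤ x}.ncard : ℝ) ≤ C * k * Real.log x := by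
  classical
  refine ⟨2 / Real.log 2, by positivity, ?_⟩
  intro A k hk hinf hpos hprim x hx
  set m := ⌊x⌋₊ with hm
  have hm2 : 2 ≤ m := Nat.le_floor (by exact_mod_cast hx)
  set L := Nat.log 2 m with hL
  set T : Finset ℕ := (Finset.Icc 1 m).filter (· ∈ A) with hT
  have hS : {n ∈ A | (n:ℝ) ≤ x} = ↑T := by
    ext n
    simp only [hT, Finset.coe_filter, Finset.mem_Icc, Set.mem_setOf_eq]
    constructor
    · rintro ⟨hA, hle⟩
      exact ⟨⟨hpos n hA, Nat.le_floor hle⟩, hA⟩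
    · rintro ⟨⟨h1, h2⟩, hA⟩
      refine ⟨hA, ?_⟩
      calc (n:ℝ) ≤ (m:ℝ) := by exact_mod_cast h2
        _ ≤ x := Nat.floor_le (by linarith)
  have hfiber : ∀ i, (T.filter (fun n => Nat.log 2 n = i)).card ≤ k - 1 := by
    intro i
    set F := T.filter (fun n => Nat.log 2 n = i) with hF
    have hsub : (F : Set ℕ) ⊆ A := by
      intro n hn
      simp only [hF, hT, Finset.coe_filter, Set.mem_setOf_eq, Finset.mem_filter] at hn
      exact hn.1.2
    have hprimF : Primitive (F : Set ℕ) := by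
      intro a ha b hb hab hdvd
      simp only [hF, hT, Finset.coe_filter, Set.mem_setOf_eq, Finset.mem_filter,
        Finset.mem_Icc] at ha hb
      have ha0 : a ≠ 0 := by omega
      have hb0 : b ≠ 0 := by omega
      have h2a : 2 ^ i ≤ a := by
        have := Nat.pow_log_le_self 2 ha0
        rwa [ha.2] at this
      have h2b : b < 2 ^ (i + 1) := by
        have := Nat.lt_pow_succ_log_self (by norm_num : 1 < 2) b
        rwa [hb.2] at this
      obtain ⟨c, rfl⟩ := hdvd
      have hc2 : 2 ≤ c := by
        rcases Nat.lt_or_ge c 2 with h | h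
        · interval_cases c <;> omega
        · exact h
      have : 2 ^ (i + 1) ≤ a * c := by
        calc 2 ^ (i + 1) = 2 * 2 ^ i := by ring
          _ ≤ 2 * a := by omega
          _ ≤ a * c := by nlinarith
      omega
    have := hprim (F : Set ℕ) hsub F.finite_toSet hprimF
    rw [Set.ncard_coe_finset] at this
    omega
  have hmaps : ∀ n ∈ T, Nat.log 2 n ∈ Finset.range (L + 1) := by
    intro n hn
    simp only [hT, Finset.mem_filter, Finset.mem_Icc] at hn
    rw [Finset.mem_range, Nat.lt_succ_iff]
    exact Nat.log_mono_right hn.1.2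
  have hcard : T.card ≤ (L + 1) * (k - 1) := by
    rw [Finset.card_eq_sum_card_fiberwise hmaps]
    calc ∑ i ∈ Finset.range (L + 1), (T.filter (fun n => Nat.log 2 n = i)).card
        ≤ ∑ _i ∈ Finset.range (L + 1), (k - 1) := Finset.sum_le_sum fun i _ => hfiber i
      _ = (L + 1) * (k - 1) := by rw [Finset.sum_const, Finset.card_range, smul_eq_mul]
  rw [hS, Set.ncard_coe_finset]
  have hlog2 : 0 < Real.log 2 := Real.log_pos (by norm_num)
  have hlogx : Real.log 2 ≤ Real.log x := Real.log_le_log (by norm_num) hx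
  have hL_le : (L : ℝ) * Real.log 2 ≤ Real.log x := by
    have h1 : (2:ℝ) ^ L ≤ x := by
      have h2 : (2:ℕ) ^ L ≤ m := Nat.pow_log_le_self 2 (by omega)
      calc (2:ℝ) ^ L = ((2 ^ L : ℕ) : ℝ) := by push_cast; ring
        _ ≤ (m : ℝ) := by exact_mod_cast h2
        _ ≤ x := Nat.floor_le (by linarith)
    have := Real.log_le_log (by positivity) h1
    rwa [Real.log_pow] at this
  have hcardR : (T.card : ℝ) ≤ ((L : ℝ) + 1) * k := by
    calc (T.card : ℝ) ≤ (((L + 1) * (k - 1) : ℕ) : ℝ) := by exact_mod_cast hcard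
      _ ≤ (((L + 1) * k : ℕ) : ℝ) := by
          exact_mod_cast Nat.mul_le_mul_left _ (Nat.sub_le k 1)
      _ = ((L : ℝ) + 1) * k := by push_cast; ring
  have hk0 : (0:ℝ) < k := by positivity
  have key : ((L : ℝ) + 1) * k ≤ 2 / Real.log 2 * k * Real.log x := by
    rw [div_mul_eq_mul_div, div_mul_eq_mul_div, le_div_iff₀ hlog2]
    nlinarith [hL_le, hlogx, hk0]
  linarith
end

section
/- Define A_j = {a ∈ ℕ : 2^{2^j} < a ≤ 2^{2^{j+1}}, 2^j ∥ a} (i.e., 2^j exactly divides a) and A = ⋃_{j≥1} A_j. Then ∑_{a ∈ A} 1/a diverges. -/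
def bigA : Set ℕ :=
  {a : ℕ | ∃ j : ℕ, 1 ≤ j ∧ 2 ^ 2 ^ j < a ∧ a ≤ 2 ^ 2 ^ (j + 1) ∧
    2 ^ j ∣ a ∧ ¬ 2 ^ (j + 1) ∣ a}

noncomputable def fA (j a : ℕ) : ℝ :=
  if 2 ^ j ∣ a ∧ ¬ 2 ^ (j + 1) ∣ a then 1 / a else 0

lemma fA_nonneg (j a : ℕ) : 0 ≤ fA j a := by
  unfold fA; split <;> positivity

lemma block_sum (j d : ℕ) :
    1 / 2 ^ (j + 2) ≤ ∑ a ∈ Finset.Ioc (2 ^ (j + 1 + d)) (2 ^ (j + 1 + d + 1)), fA j a := by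
  set K := j + 1 + d with hK
  set e : ℕ → ℕ := fun t => 2 ^ K + 2 ^ (j + 1) * t + 2 ^ j with he
  have hmem : ∀ t ∈ Finset.range (2 ^ d), e t ∈ Finset.Ioc (2 ^ K) (2 ^ (K + 1)) := by
    intro t ht
    simp only [Finset.mem_range] at ht
    simp only [Finset.mem_Ioc, he]
    constructor
    · have : 0 < 2 ^ j := Nat.pow_pos (by norm_num)
      omega
    · have h1 : 2 ^ (j + 1) * t + 2 ^ j < 2 ^ K := by
        have : 2 ^ (j + 1) * (t + 1) ≤ 2 ^ (j + 1) * 2 ^ d := by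
          exact Nat.mul_le_mul_left _ (by omega)
        have h2 : 2 ^ (j + 1) * 2 ^ d = 2 ^ K := by rw [hK, ← pow_add]
        have h3 : 0 < 2 ^ j := Nat.pow_pos (by norm_num)
        have h4 : 2 ^ j < 2 ^ (j + 1) := Nat.pow_lt_pow_right (by norm_num) (by omega)
        nlinarith [this]
      have h2 : 2 ^ (K + 1) = 2 ^ K + 2 ^ K := by ring
      omega
  have hval : ∀ t ∈ Finset.range (2 ^ d), fA j (e t) = 1 / (e t : ℝ) := by
    intro t ht
    have hdvd : 2 ^ j ∣ e t := by
      refine ⟨2 ^ (d + 1) + 2 * t + 1, ?_⟩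
      simp only [he, hK]; ring
    have hmod : e t % 2 ^ (j + 1) = 2 ^ j := by
      have : e t = 2 ^ (j + 1) * (2 ^ d + t) + 2 ^ j := by
        simp only [he, hK]; ring
      rw [this, Nat.mul_add_mod]
      exact Nat.mod_eq_of_lt (Nat.pow_lt_pow_right (by norm_num) (by omega))
    have hndvd : ¬ 2 ^ (j + 1) ∣ e t := by
      rw [Nat.dvd_iff_mod_eq_zero, hmod]
      positivity
    simp [fA, hdvd, hndvd]
  have hinj : Set.InjOn e (Finset.range (2 ^ d)) := by
    intro a _ b _ hab
    simp only [he] at hab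
    have h0 : 0 < 2 ^ (j + 1) := Nat.pow_pos (by norm_num)
    have : 2 ^ (j + 1) * a = 2 ^ (j + 1) * b := by omega
    exact Nat.eq_of_mul_eq_mul_left h0 this
  calc 1 / (2:ℝ) ^ (j + 2)
      = ∑ _t ∈ Finset.range (2 ^ d), (1:ℝ) / 2 ^ (K + 1) := by
        rw [Finset.sum_const, Finset.card_range, nsmul_eq_mul]
        have : (2:ℝ) ^ (K + 1) = 2 ^ d * 2 ^ (j + 2) := by
          rw [← pow_add, hK]; ring_nf
        rw [this]
        have h1 : (0:ℝ) < 2 ^ d := by positivity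
        have h2 : (0:ℝ) < 2 ^ (j + 2) := by positivity
        field_simp
        simp
    _ ≤ ∑ t ∈ Finset.range (2 ^ d), fA j (e t) := by
        apply Finset.sum_le_sum
        intro t ht
        rw [hval t ht]
        have hm := hmem t ht
        simp only [Finset.mem_Ioc] at hm
        have h1 : 0 < (e t : ℝ) := by
          have : 0 < e t := lt_of_le_of_lt (Nat.zero_le _) hm.1
          exact_mod_cast this
        apply div_le_div_of_nonneg_left (by norm_num) h1
        exact_mod_cast hm.2
    _ = ∑ a ∈ (Finset.range (2 ^ d)).image e, fA j a := by
        rw [Finset.sum_image (fun a ha b hb h => hinj ha hb h)]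
    _ ≤ ∑ a ∈ Finset.Ioc (2 ^ K) (2 ^ (K + 1)), fA j a := by
        apply Finset.sum_le_sum_of_subset_of_nonneg
        · intro a ha
          simp only [Finset.mem_image] at ha
          obtain ⟨t, ht, rfl⟩ := ha
          exact hmem t ht
        · intro a _ _; exact fA_nonneg j a

lemma range_sum (j P Q : ℕ) (hP : j + 1 ≤ P) (hPQ : P ≤ Q) :
    ((Q - P : ℕ) : ℝ) / 2 ^ (j + 2) ≤ ∑ a ∈ Finset.Ioc (2 ^ P) (2 ^ Q), fA j a := by
  induction Q, hPQ using Nat.le_induction with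
  | base => simp
  | succ Q hQ ih =>
    have hsplit : ∑ a ∈ Finset.Ioc (2 ^ P) (2 ^ Q), fA j a
        + ∑ a ∈ Finset.Ioc (2 ^ Q) (2 ^ (Q + 1)), fA j a
        = ∑ a ∈ Finset.Ioc (2 ^ P) (2 ^ (Q + 1)), fA j a := by
      apply Finset.sum_Ioc_consecutive
      · exact Nat.pow_le_pow_right (by norm_num) hQ
      · exact Nat.pow_le_pow_right (by norm_num) (by omega)
    have hb := block_sum j (Q - (j + 1))
    have hQeq : j + 1 + (Q - (j + 1)) = Q := by omega
    rw [hQeq] at hb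
    have hcast : ((Q + 1 - P : ℕ) : ℝ) = ((Q - P : ℕ) : ℝ) + 1 := by
      have : Q + 1 - P = (Q - P) + 1 := by omega
      rw [this]; push_cast; ring
    rw [← hsplit, hcast]
    have h2 : (0:ℝ) < 2 ^ (j + 2) := by positivity
    rw [add_div]
    exact add_le_add ih hb

noncomputable def gA : ℕ → ℝ := Set.indicator bigA (fun a : ℕ => (1 : ℝ) / a)

lemma gA_nonneg (a : ℕ) : 0 ≤ gA a :=
  Set.indicator_nonneg (fun a _ => by positivity) a

lemma fA_le_gA (j : ℕ) (hj : 1 ≤ j) (a : ℕ)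
    (ha : a ∈ Finset.Ioc (2 ^ 2 ^ j) (2 ^ 2 ^ (j + 1))) : fA j a ≤ gA a := by
  simp only [Finset.mem_Ioc] at ha
  unfold fA
  split
  · rename_i h
    have hA : a ∈ bigA := ⟨j, hj, ha.1, ha.2, h.1, h.2⟩
    rw [gA, Set.indicator_of_mem hA]
  · exact gA_nonneg a

lemma main_bound (n : ℕ) :
    (n : ℝ) / 4 ≤ ∑ a ∈ Finset.Ioc (2 ^ 2 ^ 1) (2 ^ 2 ^ (n + 1)), gA a := by
  induction n with
  | zero => simp
  | succ n ih =>
    have hsplit : ∑ a ∈ Finset.Ioc (2 ^ 2 ^ 1) (2 ^ 2 ^ (n + 1)), gA a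
        + ∑ a ∈ Finset.Ioc (2 ^ 2 ^ (n + 1)) (2 ^ 2 ^ (n + 2)), gA a
        = ∑ a ∈ Finset.Ioc (2 ^ 2 ^ 1) (2 ^ 2 ^ (n + 1 + 1)), gA a := by
      apply Finset.sum_Ioc_consecutive
      · exact Nat.pow_le_pow_right (by norm_num)
          (Nat.pow_le_pow_right (by norm_num) (by omega))
      · exact Nat.pow_le_pow_right (by norm_num)
          (Nat.pow_le_pow_right (by norm_num) (by omega))
    have hblock : (1:ℝ) / 4 ≤ ∑ a ∈ Finset.Ioc (2 ^ 2 ^ (n + 1)) (2 ^ 2 ^ (n + 2)), gA a := by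
      have h1 : ((2 ^ (n + 2) - 2 ^ (n + 1) : ℕ) : ℝ) / 2 ^ (n + 1 + 2)
          ≤ ∑ a ∈ Finset.Ioc (2 ^ 2 ^ (n + 1)) (2 ^ 2 ^ (n + 2)), fA (n + 1) a := by
        apply range_sum (n + 1) (2 ^ (n + 1)) (2 ^ (n + 2))
        · exact Nat.succ_le_of_lt ((Nat.lt_two_pow_self (n := n + 1)))
        · exact Nat.pow_le_pow_right (by norm_num) (by omega)
      have h2 : ((2 ^ (n + 2) - 2 ^ (n + 1) : ℕ) : ℝ) / 2 ^ (n + 1 + 2) = 1 / 4 := by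
        have : (2 : ℕ) ^ (n + 2) - 2 ^ (n + 1) = 2 ^ (n + 1) := by
          rw [pow_succ 2 (n + 1)]; omega
        rw [this]
        push_cast
        have h3 : (2:ℝ) ^ (n + 1 + 2) = 2 ^ (n + 1) * 4 := by ring
        rw [h3]
        have : (0:ℝ) < 2 ^ (n + 1) := by positivity
        field_simp
      have h4 : ∑ a ∈ Finset.Ioc (2 ^ 2 ^ (n + 1)) (2 ^ 2 ^ (n + 2)), fA (n + 1) a
          ≤ ∑ a ∈ Finset.Ioc (2 ^ 2 ^ (n + 1)) (2 ^ 2 ^ (n + 2)), gA a := by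
        apply Finset.sum_le_sum
        intro a ha
        exact fA_le_gA (n + 1) (by omega) a ha
      linarith
    rw [← hsplit]
    have hc : ((n + 1 : ℕ) : ℝ) = (n : ℝ) + 1 := by push_cast; ring
    rw [hc]
    linarith

theorem stmt_14 : ¬ Summable (fun a : bigA => (1 : ℝ) / (a : ℕ)) := by
  intro h
  have h' : Summable gA := by
    rw [gA, ← summable_subtype_iff_indicator]
    exact h
  obtain ⟨n, hn⟩ := exists_nat_gt (4 * ∑' a, gA a)
  have h1 := main_bound n
  have h2 : ∑ a ∈ Finset.Ioc (2 ^ 2 ^ 1) (2 ^ 2 ^ (n + 1)), gA a ≤ ∑' a, gA a :=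
    Summable.sum_le_tsum _ (fun a _ => gA_nonneg a) h'
  have h3 := h1.trans h2
  linarith
end

section
/- Define A_j = {a ∈ ℕ : 2^{2^j} < a ≤ 2^{2^{j+1}}, 2^j ∥ a} and A = ⋃_{j≥1} A_j. Then ∑_{a ∈ A, a > 1} 1/(a·log a) converges. -/
open Finset

lemma sum_inv_Icc_le (M : ℕ) :
    ∑ m ∈ Finset.Icc 1 M, ((m : ℝ))⁻¹ ≤ 1 + Real.log M := by
  have h := harmonic_le_one_add_log M
  rw [harmonic_eq_sum_Icc] at h
  push_cast at h
  exact h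

theorem stmt_15 :
    Summable (fun a : {a : ℕ | a ∈ bigA ∧ 1 < a} =>
      (1 : ℝ) / ((a : ℕ) * Real.log (a : ℕ))) := by
  set F : ℕ → ℝ := fun a => (1 : ℝ) / (a * Real.log a) with hF
  have hFnn : ∀ a : ℕ, 0 ≤ F a := fun a => by
    apply div_nonneg zero_le_one
    exact mul_nonneg (Nat.cast_nonneg a) (Real.log_natCast_nonneg a)
  have hl2 : 0 < Real.log 2 := Real.log_pos (by norm_num)
  rw [show (fun a : {a : ℕ | a ∈ bigA ∧ 1 < a} =>
      (1 : ℝ) / ((a : ℕ) * Real.log (a : ℕ))) = F ∘ (↑) from rfl,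
    summable_subtype_iff_indicator]
  set g : ℕ → ℕ → ℝ := fun j a =>
    if 2 ^ 2 ^ j < a ∧ a ≤ 2 ^ 2 ^ (j + 1) ∧ 2 ^ j ∣ a then F a else 0 with hg
  have hgnn : ∀ j a, 0 ≤ g j a := by
    intro j a
    simp only [hg]
    split
    · exact hFnn a
    · exact le_rfl
  -- key bound for each column
  have key : ∀ j n : ℕ, ∑ a ∈ range n, g j a ≤ (4 / Real.log 2) * (1 / 2) ^ j := by
    intro j n
    have hsum : ∑ a ∈ range n, g j a
        = ∑ a ∈ (range n).filter
            (fun a => 2 ^ 2 ^ j < a ∧ a ≤ 2 ^ 2 ^ (j + 1) ∧ 2 ^ j ∣ a), F a := by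
      rw [Finset.sum_filter]
    rw [hsum]
    set T := (range n).filter
        (fun a => 2 ^ 2 ^ j < a ∧ a ≤ 2 ^ 2 ^ (j + 1) ∧ 2 ^ j ∣ a) with hT
    set c : ℝ := 1 / ((4 : ℝ) ^ j * Real.log 2) with hc
    have hcnn : 0 ≤ c := by positivity
    -- termwise bound
    have step1 : ∑ a ∈ T, F a ≤ ∑ a ∈ T, c * ((a / 2 ^ j : ℕ) : ℝ)⁻¹ := by
      apply Finset.sum_le_sum
      intro a ha
      simp only [hT, Finset.mem_filter] at ha
      obtain ⟨-, hlt, hle, hdvd⟩ := ha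
      have hm1 : 1 ≤ a / 2 ^ j := by
        rw [Nat.one_le_div_iff (Nat.pow_pos (by norm_num : 0 < 2))]
        calc 2 ^ j ≤ 2 ^ 2 ^ j := Nat.pow_le_pow_right (by norm_num) (Nat.le_of_lt (Nat.lt_two_pow_self (n := j)))
          _ ≤ a := le_of_lt hlt
      have ha2 : (2 : ℝ) ^ j * ((a / 2 ^ j : ℕ) : ℝ) = (a : ℝ) := by
        rw [← Nat.cast_ofNat, ← Nat.cast_pow, ← Nat.cast_mul, Nat.mul_div_cancel' hdvd]
      have hloga : (2 : ℝ) ^ j * Real.log 2 ≤ Real.log a := by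
        have : Real.log ((2 : ℝ) ^ (2 ^ j : ℕ)) ≤ Real.log a := by
          apply Real.log_le_log (by positivity)
          calc ((2 : ℝ) ^ (2 ^ j : ℕ)) = ((2 ^ 2 ^ j : ℕ) : ℝ) := by push_cast; ring
            _ ≤ (a : ℝ) := by exact_mod_cast le_of_lt hlt
        rwa [Real.log_pow, ← Nat.cast_ofNat, Nat.cast_pow, Nat.cast_ofNat] at this
      have hapos : (0 : ℝ) < a := by
        have : 0 < a := lt_of_le_of_lt (Nat.zero_le _) hlt
        exact_mod_cast this
      have hbig : (2 : ℝ) ^ j * ((a / 2 ^ j : ℕ) : ℝ) * ((2 : ℝ) ^ j * Real.log 2)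
          ≤ (a : ℝ) * Real.log a := by
        rw [ha2]
        apply mul_le_mul_of_nonneg_left hloga (le_of_lt hapos)
      have hmpos : (0 : ℝ) < ((a / 2 ^ j : ℕ) : ℝ) := by exact_mod_cast hm1
      calc F a ≤ 1 / ((2 : ℝ) ^ j * ((a / 2 ^ j : ℕ) : ℝ) * ((2 : ℝ) ^ j * Real.log 2)) := by
            apply one_div_le_one_div_of_le (by positivity) hbig
        _ = c * ((a / 2 ^ j : ℕ) : ℝ)⁻¹ := by
            rw [hc]
            have : (4 : ℝ) ^ j = (2 : ℝ) ^ j * (2 : ℝ) ^ j := by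
              rw [← mul_pow]; norm_num
            rw [this]
            field_simp
    -- reindex and harmonic bound
    set M := 2 ^ (2 ^ (j + 1) - j) with hM
    have step2 : ∑ a ∈ T, ((a / 2 ^ j : ℕ) : ℝ)⁻¹ ≤ ∑ m ∈ Finset.Icc 1 M, ((m : ℝ))⁻¹ := by
      have hinj : Set.InjOn (fun a => a / 2 ^ j) T := by
        intro a ha b hb hab
        simp only [hT, Finset.coe_filter, Set.mem_setOf_eq] at ha hb
        have := congrArg (· * 2 ^ j) hab
        simpa [Nat.div_mul_cancel ha.2.2.2, Nat.div_mul_cancel hb.2.2.2] using this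
      rw [← Finset.sum_image (f := fun m : ℕ => ((m : ℝ))⁻¹) (fun a ha b hb h => hinj ha hb h)]
      apply Finset.sum_le_sum_of_subset_of_nonneg
      · intro m hm
        simp only [Finset.mem_image, hT, Finset.mem_filter] at hm
        obtain ⟨a, ⟨-, hlt, hle, hdvd⟩, rfl⟩ := hm
        rw [Finset.mem_Icc]
        constructor
        · rw [Nat.one_le_div_iff (Nat.pow_pos (by norm_num : 0 < 2))]
          calc 2 ^ j ≤ 2 ^ 2 ^ j := Nat.pow_le_pow_right (by norm_num) (Nat.le_of_lt (Nat.lt_two_pow_self (n := j)))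
            _ ≤ a := le_of_lt hlt
        · have hjle : j ≤ 2 ^ (j + 1) :=
            le_of_lt ((Nat.lt_two_pow_self (n := j)).trans_le
              (Nat.pow_le_pow_right (by norm_num) (Nat.le_succ j)))
          calc a / 2 ^ j ≤ 2 ^ 2 ^ (j + 1) / 2 ^ j := Nat.div_le_div_right hle
            _ = 2 ^ (2 ^ (j + 1) - j) := Nat.pow_div hjle (by norm_num)
      · intro m _ _
        positivity
    have step3 : (1 : ℝ) + Real.log M ≤ 2 ^ (j + 2) := by
      have hlogM : Real.log M = (2 ^ (j + 1) - j : ℕ) * Real.log 2 := by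
        rw [hM]
        push_cast
        rw [Real.log_pow]
      rw [hlogM]
      have h1 : ((2 ^ (j + 1) - j : ℕ) : ℝ) ≤ (2 : ℝ) ^ (j + 1) := by
        calc ((2 ^ (j + 1) - j : ℕ) : ℝ) ≤ ((2 ^ (j + 1) : ℕ) : ℝ) := by
              exact_mod_cast Nat.sub_le _ _
          _ = (2 : ℝ) ^ (j + 1) := by push_cast; ring
      have h2 : Real.log 2 ≤ 1 := by
        have := Real.log_le_sub_one_of_pos (show (0:ℝ) < 2 by norm_num)
        linarith
      have h3 : ((2 ^ (j + 1) - j : ℕ) : ℝ) * Real.log 2 ≤ (2 : ℝ) ^ (j + 1) * 1 := by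
        apply mul_le_mul h1 h2 (le_of_lt hl2) (by positivity)
      have h4 : (1 : ℝ) ≤ (2 : ℝ) ^ (j + 1) := one_le_pow₀ (by norm_num)
      have h5 : (2 : ℝ) ^ (j + 1) + (2 : ℝ) ^ (j + 1) = 2 ^ (j + 2) := by ring
      linarith
    calc ∑ a ∈ T, F a ≤ ∑ a ∈ T, c * ((a / 2 ^ j : ℕ) : ℝ)⁻¹ := step1
      _ = c * ∑ a ∈ T, ((a / 2 ^ j : ℕ) : ℝ)⁻¹ := by rw [Finset.mul_sum]
      _ ≤ c * (1 + Real.log M) := by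
          apply mul_le_mul_of_nonneg_left _ hcnn
          exact le_trans step2 (sum_inv_Icc_le M)
      _ ≤ c * 2 ^ (j + 2) := mul_le_mul_of_nonneg_left step3 hcnn
      _ = (4 / Real.log 2) * (1 / 2) ^ j := by
          rw [hc]
          have : (4 : ℝ) ^ j = (2 : ℝ) ^ j * (2 : ℝ) ^ j := by rw [← mul_pow]; norm_num
          rw [this]
          field_simp
          rw [div_pow, one_pow]
          field_simp
          ring
  -- assemble
  apply summable_of_sum_range_le (c := 8 / Real.log 2)
    (fun a => Set.indicator_nonneg (fun x _ => hFnn x) a)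
  intro n
  have hrow : ∀ a ∈ range n, Set.indicator {a : ℕ | a ∈ bigA ∧ 1 < a} F a
      ≤ ∑ j ∈ range n, g j a := by
    intro a ha
    by_cases hmem : a ∈ {a : ℕ | a ∈ bigA ∧ 1 < a}
    · rw [Set.indicator_of_mem hmem]
      obtain ⟨⟨j, hj1, hlt, hle, hdvd, -⟩, -⟩ := hmem
      have hjn : j < n := by
        have h1 : j < 2 ^ 2 ^ j :=
          lt_of_lt_of_le (Nat.lt_two_pow_self (n := j)) (Nat.pow_le_pow_right (by norm_num)
            (Nat.le_of_lt (Nat.lt_two_pow_self (n := j))))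
        have h2 : a < n := Finset.mem_range.mp ha
        omega
      have hcond : 2 ^ 2 ^ j < a ∧ a ≤ 2 ^ 2 ^ (j + 1) ∧ 2 ^ j ∣ a := ⟨hlt, hle, hdvd⟩
      have : g j a = F a := by
        simp only [hg, if_pos hcond]
      rw [← this]
      exact Finset.single_le_sum (fun i _ => hgnn i a) (Finset.mem_range.mpr hjn)
    · rw [Set.indicator_of_notMem hmem]
      exact Finset.sum_nonneg (fun i _ => hgnn i a)
  calc ∑ a ∈ range n, Set.indicator {a : ℕ | a ∈ bigA ∧ 1 < a} F a
      ≤ ∑ a ∈ range n, ∑ j ∈ range n, g j a := Finset.sum_le_sum hrow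
    _ = ∑ j ∈ range n, ∑ a ∈ range n, g j a := Finset.sum_comm
    _ ≤ ∑ j ∈ range n, (4 / Real.log 2) * (1 / 2) ^ j :=
        Finset.sum_le_sum (fun j _ => key j n)
    _ = (4 / Real.log 2) * ∑ j ∈ range n, (1 / 2 : ℝ) ^ j := by rw [Finset.mul_sum]
    _ ≤ (4 / Real.log 2) * 2 := by
        apply mul_le_mul_of_nonneg_left (sum_geometric_two_le n) (by positivity)
    _ = 8 / Real.log 2 := by ring
end

section
/- Let A_j = {a ∈ ℕ : 2^{2^j} < a ≤ 2^{2^{j+1}}, 2^j ∥ a}, A = ⋃_{j≥1} A_j, and let S ⊆ A be primitive. For s ∈ ℕ let s° denote the largest odd divisor of s. If s_1, s_2 ∈ S are distinct, then s_1° does not divide s_2°. -/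
/-- The largest odd divisor of `s`. -/
def oddPart (s : ℕ) : ℕ := s / 2 ^ (s.factorization 2)

lemma aux_pow_ineq (j₂ j₁ : ℕ) (h : j₂ + 1 ≤ j₁) :
    2 ^ (j₂ + 1) + j₁ ≤ 2 ^ j₁ + j₂ + 1 := by
  induction j₁, h using Nat.le_induction with
  | base => omega
  | succ n hn ih =>
    have h1 : 1 ≤ 2 ^ n := Nat.one_le_two_pow
    have h2 : 2 ^ (n + 1) = 2 * 2 ^ n := by ring
    omega

lemma aux_fact (s j : ℕ) (hs0 : s ≠ 0) (hdvd : 2 ^ j ∣ s)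
    (hnot : ¬ 2 ^ (j + 1) ∣ s) : s.factorization 2 = j := by
  have h1 := (Nat.Prime.pow_dvd_iff_le_factorization Nat.prime_two hs0).mp hdvd
  have h2 : ¬ (j + 1 ≤ s.factorization 2) := fun h =>
    hnot ((Nat.Prime.pow_dvd_iff_le_factorization Nat.prime_two hs0).mpr h)
  omega

theorem stmt_16 (S : Set ℕ) (hSA : S ⊆ bigA) (hprim : Primitive S)
    (s₁ s₂ : ℕ) (hs₁ : s₁ ∈ S) (hs₂ : s₂ ∈ S) (hne : s₁ ≠ s₂) :
    ¬ oddPart s₁ ∣ oddPart s₂ := by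
  intro hdvd
  obtain ⟨j₁, hj₁1, hlo₁, hhi₁, hd₁, hnd₁⟩ := hSA hs₁
  obtain ⟨j₂, hj₂1, hlo₂, hhi₂, hd₂, hnd₂⟩ := hSA hs₂
  have hs₁0 : s₁ ≠ 0 := by
    have : (0:ℕ) < 2 ^ 2 ^ j₁ := Nat.pow_pos (by norm_num)
    omega
  have hs₂0 : s₂ ≠ 0 := by
    have : (0:ℕ) < 2 ^ 2 ^ j₂ := Nat.pow_pos (by norm_num)
    omega
  have hf₁ : s₁.factorization 2 = j₁ := aux_fact s₁ j₁ hs₁0 hd₁ hnd₁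
  have hf₂ : s₂.factorization 2 = j₂ := aux_fact s₂ j₂ hs₂0 hd₂ hnd₂
  set q₁ := oddPart s₁ with hq₁def
  set q₂ := oddPart s₂ with hq₂def
  have hq₁ : 2 ^ j₁ * q₁ = s₁ := by
    rw [hq₁def, oddPart, hf₁]; exact Nat.mul_div_cancel' hd₁
  have hq₂ : 2 ^ j₂ * q₂ = s₂ := by
    rw [hq₂def, oddPart, hf₂]; exact Nat.mul_div_cancel' hd₂
  have hq₁0 : 0 < q₁ := by
    rcases Nat.eq_zero_or_pos q₁ with h | h
    · exfalso; apply hs₁0; rw [← hq₁, h, mul_zero]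
    · exact h
  have hq₂0 : 0 < q₂ := by
    rcases Nat.eq_zero_or_pos q₂ with h | h
    · exfalso; apply hs₂0; rw [← hq₂, h, mul_zero]
    · exact h
  rcases le_or_gt j₁ j₂ with hj | hj
  · -- then s₁ ∣ s₂, contradicting primitivity
    have : s₁ ∣ s₂ := by
      rw [← hq₁, ← hq₂]
      exact mul_dvd_mul (pow_dvd_pow 2 hj) hdvd
    exact hprim s₁ hs₁ s₂ hs₂ hne this
  · -- j₂ + 1 ≤ j₁
    have hj' : j₂ + 1 ≤ j₁ := hj
    -- key: q₂ < 2 * q₁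
    have key : q₂ < 2 * q₁ := by
      have h1 : s₂ * 2 ^ j₁ ≤ 2 ^ (2 ^ (j₂ + 1) + j₁) := by
        rw [pow_add]
        exact Nat.mul_le_mul_right _ hhi₂
      have h2 : 2 ^ (2 ^ (j₂ + 1) + j₁) ≤ 2 ^ (2 ^ j₁ + j₂ + 1) :=
        Nat.pow_le_pow_right (by norm_num) (aux_pow_ineq j₂ j₁ hj')
      have h3 : 2 ^ (2 ^ j₁ + j₂ + 1) < s₁ * 2 ^ (j₂ + 1) := by
        have heq : 2 ^ (2 ^ j₁ + j₂ + 1) = 2 ^ 2 ^ j₁ * 2 ^ (j₂ + 1) := by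
          rw [← pow_add, add_assoc]
        rw [heq]
        exact Nat.mul_lt_mul_of_pos_right hlo₁ (Nat.pow_pos (by norm_num))
      have h4 : s₂ * 2 ^ j₁ < s₁ * 2 ^ (j₂ + 1) := by omega
      rw [← hq₁, ← hq₂] at h4
      have h5 : q₂ * (2 ^ j₂ * 2 ^ j₁) < (2 * q₁) * (2 ^ j₂ * 2 ^ j₁) := by
        calc q₂ * (2 ^ j₂ * 2 ^ j₁) = 2 ^ j₂ * q₂ * 2 ^ j₁ := by ring
        _ < 2 ^ j₁ * q₁ * 2 ^ (j₂ + 1) := h4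
        _ = (2 * q₁) * (2 ^ j₂ * 2 ^ j₁) := by ring
      exact Nat.lt_of_mul_lt_mul_right h5
    -- q₁ ∣ q₂ and q₂ < 2 q₁ and q₂ > 0 imply q₂ = q₁
    obtain ⟨k, hk⟩ := hdvd
    have hk1 : k = 1 := by
      rcases Nat.lt_or_ge k 2 with h | h
      · interval_cases k <;> omega
      · exfalso; nlinarith [hk, key, hq₁0]
    have heq : q₂ = q₁ := by rw [hk, hk1, mul_one]
    have : s₂ ∣ s₁ := by
      rw [← hq₁, ← hq₂, heq]
      exact mul_dvd_mul (pow_dvd_pow 2 (le_of_lt hj)) dvd_rfl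
    exact hprim s₂ hs₂ s₁ hs₁ hne.symm this
end

section
/- Assume the Erdős bound: there is a constant C₀ such that ∑_{n ∈ T, n>1} 1/(n·log n) ≤ C₀ for every primitive set T. Then, with A = ⋃_{j≥1} {a : 2^{2^j} < a ≤ 2^{2^{j+1}}, 2^j ∥ a}, every primitive subset S ⊆ A satisfies ∑_{s ∈ S} 1/s < ∞. -/
lemma bigA_facts {a : ℕ} (ha : a ∈ bigA) :
    a ≠ 0 ∧ 1 ≤ a.factorization 2 ∧
    2 ^ 2 ^ (a.factorization 2) < a ∧ a ≤ 2 ^ 2 ^ (a.factorization 2 + 1) := by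
  obtain ⟨j, hj1, h1, h2, hd, hnd⟩ := ha
  have ha0 : a ≠ 0 := by
    have : 0 < 2 ^ 2 ^ j := Nat.pow_pos (by norm_num)
    omega
  have hfe : a.factorization 2 = j := by
    have hp : Nat.Prime 2 := Nat.prime_two
    have h1' : j ≤ a.factorization 2 := (hp.pow_dvd_iff_le_factorization ha0).mp hd
    have h2' : ¬ (j + 1 ≤ a.factorization 2) := fun h =>
      hnd ((hp.pow_dvd_iff_le_factorization ha0).mpr h)
    omega
  rw [hfe]; exact ⟨ha0, hj1, h1, h2⟩


def oddp (a : ℕ) : ℕ := a / 2 ^ (a.factorization 2)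

lemma two_pow_sub_mono (k : ℕ) : ∀ j, k ≤ j → 2 ^ k - k ≤ 2 ^ j - j := by
  intro j
  induction j with
  | zero => intro h; have : k = 0 := Nat.le_zero.mp h; subst this; exact le_rfl
  | succ n ih =>
    intro h
    rcases Nat.lt_succ_iff_lt_or_eq.mp (Nat.lt_succ_of_le h) with h' | h'
    · have hkn : k ≤ n := by omega
      have h1 : n < 2 ^ n := Nat.lt_two_pow_self (n := n)
      have h2 : 2 ^ (n + 1) = 2 * 2 ^ n := by ring
      have h3 := ih hkn
      omega
    · subst h'; exact le_rfl

lemma oddpart_eq {a : ℕ} (ha : a ∈ bigA) :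
    a = 2 ^ (a.factorization 2) * oddp a := by
  have hd : 2 ^ (a.factorization 2) ∣ a := Nat.ordProj_dvd a 2
  exact (Nat.mul_div_cancel' hd).symm

lemma oddpart_lb {a : ℕ} (ha : a ∈ bigA) :
    2 ^ (2 ^ (a.factorization 2) - a.factorization 2) < oddp a := by
  obtain ⟨ha0, hj1, h1, h2⟩ := bigA_facts ha
  set j := a.factorization 2
  have hj : j ≤ 2 ^ j := (Nat.lt_two_pow_self (n := j)).le
  have hsplit : 2 ^ (2:ℕ) ^ j = 2 ^ j * 2 ^ (2 ^ j - j) := by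
    rw [← pow_add]; congr 1; omega
  have heq := oddpart_eq ha
  have h1' : 2 ^ j * 2 ^ (2 ^ j - j) < 2 ^ j * oddp a := by
    rw [← hsplit, ← heq]; exact h1
  exact lt_of_mul_lt_mul_left h1' (Nat.zero_le _)

lemma oddpart_ub {a : ℕ} (ha : a ∈ bigA) :
    oddp a ≤ 2 ^ (2 ^ (a.factorization 2 + 1) - a.factorization 2) := by
  obtain ⟨ha0, hj1, h1, h2⟩ := bigA_facts ha
  set j := a.factorization 2
  have hj : j ≤ 2 ^ (j + 1) :=
    (Nat.lt_two_pow_self (n := j)).le.trans (Nat.pow_le_pow_right (by norm_num) (by omega))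
  have hsplit : 2 ^ (2:ℕ) ^ (j + 1) = 2 ^ j * 2 ^ (2 ^ (j + 1) - j) := by
    rw [← pow_add]; congr 1; omega
  have heq := oddpart_eq ha
  have h2' : 2 ^ j * oddp a ≤ 2 ^ j * 2 ^ (2 ^ (j + 1) - j) := by
    rw [← hsplit, ← heq]; exact h2
  exact Nat.le_of_mul_le_mul_left h2' (Nat.pow_pos (by norm_num))

lemma oddpart_gt_two {a : ℕ} (ha : a ∈ bigA) : 2 < oddp a := by
  obtain ⟨ha0, hj1, h1, h2⟩ := bigA_facts ha
  have hlb := oddpart_lb ha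
  have h3 : (2:ℕ) ^ 1 ≤ 2 ^ (2 ^ (a.factorization 2) - a.factorization 2) := by
    apply Nat.pow_le_pow_right (by norm_num)
    have := Nat.lt_two_pow_self (n := a.factorization 2)
    omega
  simp at h3; omega

lemma dvd_of_le_fact {s t : ℕ} (hs : s ∈ bigA) (ht : t ∈ bigA)
    (hle : s.factorization 2 ≤ t.factorization 2) (hdvd : oddp s ∣ oddp t) : s ∣ t := by
  rw [oddpart_eq hs, oddpart_eq ht]
  exact mul_dvd_mul (pow_dvd_pow 2 hle) hdvd

lemma no_lt_case {s t : ℕ} (hs : s ∈ bigA) (ht : t ∈ bigA)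
    (hlt : t.factorization 2 < s.factorization 2) (hdvd : oddp s ∣ oddp t)
    (hne : oddp s ≠ oddp t) : False := by
  obtain ⟨m, hm⟩ := hdvd
  have hos : 2 < oddp s := oddpart_gt_two hs
  have hot : 2 < oddp t := oddpart_gt_two ht
  have hm2 : 2 ≤ m := by
    rcases Nat.lt_or_ge m 2 with h | h
    · interval_cases m
      · omega
      · simp at hm; exact absurd hm.symm hne
    · exact h
  have hdouble : 2 * oddp s ≤ oddp t := by
    calc 2 * oddp s ≤ oddp s * m := by nlinarith
    _ = oddp t := hm.symm
  have lbs := oddpart_lb hs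
  have ubt := oddpart_ub ht
  -- exponent comparison : 2^((t.factorization 2)+1) - (t.factorization 2) ≤ 2^(s.factorization 2) - (s.factorization 2) + 1
  have hmono := two_pow_sub_mono ((t.factorization 2) + 1) (s.factorization 2) hlt
  have h1 : (t.factorization 2) + 1 ≤ 2 ^ ((t.factorization 2) + 1) := Nat.lt_two_pow_self (n := (t.factorization 2) + 1) |>.le.trans_eq rfl |>.trans le_rfl
  have h2 : (s.factorization 2) ≤ 2 ^ (s.factorization 2) := (Nat.lt_two_pow_self (n := s.factorization 2)).le
  have hexp : 2 ^ ((t.factorization 2) + 1) - (t.factorization 2) ≤ 2 ^ (s.factorization 2) - (s.factorization 2) + 1 := by omega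
  have : oddp t ≤ 2 ^ (2 ^ (s.factorization 2) - (s.factorization 2) + 1) :=
    ubt.trans (Nat.pow_le_pow_right (by norm_num) hexp)
  have hfin : 2 ^ (2 ^ (s.factorization 2) - (s.factorization 2) + 1) = 2 * 2 ^ (2 ^ (s.factorization 2) - (s.factorization 2)) := by ring
  omega

lemma image_primitive {S : Set ℕ} (hSA : S ⊆ bigA) (hprim : Primitive S) :
    Primitive (oddp '' S) := by
  rintro _ ⟨s, hs, rfl⟩ _ ⟨t, ht, rfl⟩ hne hdvd
  have hst : s ≠ t := fun h => hne (by rw [h])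
  rcases le_or_gt (s.factorization 2) (t.factorization 2) with h | h
  · exact hprim s hs t ht hst (dvd_of_le_fact (hSA hs) (hSA ht) h hdvd)
  · exact no_lt_case (hSA hs) (hSA ht) h hdvd hne

lemma oddp_inj {S : Set ℕ} (hSA : S ⊆ bigA) (hprim : Primitive S)
    {s t : ℕ} (hs : s ∈ S) (ht : t ∈ S) (h : oddp s = oddp t) : s = t := by
  by_contra hst
  have hne : t ≠ s := fun h' => hst h'.symm
  rcases lt_trichotomy (s.factorization 2) (t.factorization 2) with hj | hj | hj
  · exact hprim s hs t ht hst (dvd_of_le_fact (hSA hs) (hSA ht) hj.le (h ▸ dvd_rfl))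
  · have : s = t := by rw [oddpart_eq (hSA hs), oddpart_eq (hSA ht), hj, h]
    exact hst this
  · exact hprim t ht s hs hne (dvd_of_le_fact (hSA ht) (hSA hs) hj.le (h ▸ dvd_rfl))

theorem stmt_19 (C₀ : ℝ)
    (herdos : ∀ T : Set ℕ, (∀ t ∈ T, 0 < t) → Primitive T →
      Summable (fun n : {n : ℕ | n ∈ T ∧ 1 < n} => (1 : ℝ) / ((n : ℕ) * Real.log (n : ℕ))) ∧
      (∑' n : {n : ℕ | n ∈ T ∧ 1 < n}, (1 : ℝ) / ((n : ℕ) * Real.log (n : ℕ))) ≤ C₀)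
    (S : Set ℕ) (hSA : S ⊆ bigA) (hprim : Primitive S) :
    Summable (fun s : S => (1 : ℝ) / (s : ℕ)) := by
  classical
  set T : Set ℕ := oddp '' S with hT
  have hTpos : ∀ t ∈ T, 0 < t := by
    rintro _ ⟨s, hs, rfl⟩
    have := oddpart_gt_two (hSA hs); omega
  have hTprim : Primitive T := image_primitive hSA hprim
  obtain ⟨hsum, -⟩ := herdos T hTpos hTprim
  have hmem : ∀ s : S, oddp (s : ℕ) ∈ {n : ℕ | n ∈ T ∧ 1 < n} := fun s =>
    ⟨⟨(s : ℕ), s.2, rfl⟩, by have := oddpart_gt_two (hSA s.2); omega⟩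
  let F : S → {n : ℕ | n ∈ T ∧ 1 < n} := fun s => ⟨oddp (s : ℕ), hmem s⟩
  have hFinj : Function.Injective F := by
    intro s t h
    have h' : oddp (s : ℕ) = oddp (t : ℕ) := congrArg Subtype.val h
    exact Subtype.ext (oddp_inj hSA hprim s.2 t.2 h')
  have hsum2 : Summable (fun s : S =>
      (1 : ℝ) / ((oddp (s : ℕ)) * Real.log (oddp (s : ℕ)))) := by
    have := hsum.comp_injective hFinj
    exact this
  have hsum3 := hsum2.mul_left (2 * Real.log 2)
  apply Summable.of_nonneg_of_le (fun s => by positivity) _ hsum3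
  intro s
  obtain ⟨ha0, hj1, h1, h2⟩ := bigA_facts (hSA s.2)
  set a : ℕ := (s : ℕ) with haa
  set j := a.factorization 2 with hjj
  set o := oddp a with hoo
  have ho3 : 3 ≤ o := oddpart_gt_two (hSA s.2)
  have heq : a = 2 ^ j * o := oddpart_eq (hSA s.2)
  have hop : (0 : ℝ) < (o : ℝ) := by positivity
  have hlogo : (0 : ℝ) < Real.log o := Real.log_pos (by exact_mod_cast by omega)
  have hap : (0 : ℝ) < (a : ℝ) := by
    have : 0 < a := by omega
    positivity
  have hlog_le : Real.log o ≤ (2 : ℝ) ^ (j + 1) * Real.log 2 := by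
    have h1' : (o : ℝ) ≤ (a : ℝ) := by
      exact_mod_cast Nat.le_of_dvd (by omega) ⟨2 ^ j, by rw [heq]; ring⟩
    have h2' : (a : ℝ) ≤ (2 : ℝ) ^ (2 ^ (j + 1)) := by
      exact_mod_cast h2
    calc Real.log o ≤ Real.log ((2 : ℝ) ^ (2 ^ (j + 1))) :=
          Real.log_le_log (by positivity) (h1'.trans h2')
      _ = (2 ^ (j + 1) : ℕ) * Real.log 2 := by rw [Real.log_pow]
      _ = (2 : ℝ) ^ (j + 1) * Real.log 2 := by push_cast; ring
  have hcast : (a : ℝ) = (2 : ℝ) ^ j * (o : ℝ) := by exact_mod_cast heq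
  have key : (o : ℝ) * Real.log o ≤ (2 * Real.log 2) * (a : ℝ) := by
    calc (o : ℝ) * Real.log o ≤ (o : ℝ) * ((2 : ℝ) ^ (j + 1) * Real.log 2) :=
          mul_le_mul_of_nonneg_left hlog_le hop.le
      _ = (2 * Real.log 2) * ((2 : ℝ) ^ j * (o : ℝ)) := by ring
      _ = (2 * Real.log 2) * (a : ℝ) := by rw [hcast]
  have hrhs : (2 * Real.log 2) * ((1 : ℝ) / ((o : ℝ) * Real.log o))
      = (2 * Real.log 2) / ((o : ℝ) * Real.log o) := by ring
  rw [hrhs, div_le_div_iff₀ hap (by positivity)]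
  nlinarith [key]
end
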